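/- Let ℝⁿ be endowed with a norm and C ⊆ ℝⁿ a nonempty polytope. Then for all x, y ∈ C, ‖y - x‖ ≥ v(y, x) · Φ(F(y), C), where v is the vertex distance, F(y) is the minimal face of C containing y, and Φ(F, C) is the inner facial distance. -/

import Mathlib

/-- Distance between two sets: `min_{a ∈ A, b ∈ B} ‖a - b‖`. -/
noncomputable def setDist' {E : Type*} [NormedAddCommGroup E] [NormedSpace ℝ E]
    (A B : Set E) : ℝ :=
  sInf {d : ℝ | ∃ a ∈ A, ∃ b ∈ B, d = ‖a - b‖}

/-- `min {γ ≥ 0 : y - x = γ (w - u) for some w ∈ C and u ∈ T}`. -/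
noncomputable def stepDist {E : Type*} [NormedAddCommGroup E] [NormedSpace ℝ E]
    (C T : Set E) (y x : E) : ℝ :=
  sInf {γ : ℝ | 0 ≤ γ ∧ ∃ w ∈ C, ∃ u ∈ T, y - x = γ • (w - u)}

/-- The collection `S(x)` of supports of convex-combination representations of `x`
by the vertices in `V`. -/
def supports {E : Type*} [NormedAddCommGroup E] [NormedSpace ℝ E]
    (V : Finset E) (x : E) : Set (Set E) :=
  {S | ∃ w : E → ℝ, (∀ v, 0 ≤ w v) ∧ (∑ v ∈ V, w v) = 1 ∧
    (∑ v ∈ V, w v • v) = x ∧ S = {v | v ∈ V ∧ 0 < w v}}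

/-- The vertex distance. -/
noncomputable def vertexDist {E : Type*} [NormedAddCommGroup E] [NormedSpace ℝ E]
    (V : Finset E) (C : Set E) (y x : E) : ℝ :=
  sSup {g : ℝ | ∃ S ∈ supports V x, g = stepDist C (convexHull ℝ S) y x}

/-- The minimal face of `C` containing `y` (faces of a polytope are its nonempty
extreme subsets). -/
def minFace {E : Type*} [NormedAddCommGroup E] [NormedSpace ℝ E]
    (C : Set E) (y : E) : Set E :=
  ⋂₀ {F : Set E | IsExtreme ℝ C F ∧ y ∈ F}

/-- The inner facial distance
`Φ(F, C) = min_{G ∈ faces(F), G ≠ C} dist(G, conv(vertices(C) \ G))`. -/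
noncomputable def innerFacial {E : Type*} [NormedAddCommGroup E] [NormedSpace ℝ E]
    (F C : Set E) : ℝ :=
  sInf {d : ℝ | ∃ G : Set E, IsExtreme ℝ F G ∧ G.Nonempty ∧ G ≠ C ∧
    d = setDist' G (convexHull ℝ (Set.extremePoints ℝ C \ G))}



section helpers
variable {E : Type*} [NormedAddCommGroup E] [NormedSpace ℝ E]

/-- The minimal face of `A` containing `p`, defined directly. -/
def face0 (A : Set E) (p : E) : Set E :=
  {z | z ∈ A ∧ ∃ ε : ℝ, 0 < ε ∧ p + ε • (p - z) ∈ A}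

lemma face0_subset (A : Set E) (p : E) : face0 A p ⊆ A := fun _ hz => hz.1

lemma mem_face0_self {A : Set E} {p : E} (hp : p ∈ A) : p ∈ face0 A p :=
  ⟨hp, 1, one_pos, by simpa using hp⟩

lemma face0_convex {A : Set E} (hA : Convex ℝ A) {p : E} (hp : p ∈ A) :
    Convex ℝ (face0 A p) := by
  rintro z1 ⟨hz1A, ε1, hε1, hq1⟩ z2 ⟨hz2A, ε2, hε2, hq2⟩ a b ha hb hab
  refine ⟨hA hz1A hz2A ha hb hab, min ε1 ε2, lt_min hε1 hε2, ?_⟩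
  have key : ∀ z : E, ∀ ε : ℝ, 0 < ε → min ε1 ε2 ≤ ε → p + ε • (p - z) ∈ A →
      p + (min ε1 ε2) • (p - z) ∈ A := by
    intro z ε hε hle hq
    have h : p + (min ε1 ε2) • (p - z)
        = (1 - min ε1 ε2 / ε) • p + (min ε1 ε2 / ε) • (p + ε • (p - z)) := by
      match_scalars <;> field_simp <;> ring
    rw [h]
    exact hA hp hq (sub_nonneg.2 ((div_le_one hε).2 hle))
      (div_nonneg (le_of_lt (lt_min hε1 hε2)) hε.le) (by ring)
  have m1 := key z1 ε1 hε1 (min_le_left _ _) hq1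
  have m2 := key z2 ε2 hε2 (min_le_right _ _) hq2
  have h2 : p + (min ε1 ε2) • (p - (a • z1 + b • z2))
      = a • (p + (min ε1 ε2) • (p - z1)) + b • (p + (min ε1 ε2) • (p - z2)) := by
    have hb' : b = 1 - a := by linarith
    subst hb'; module
  rw [h2]
  exact hA m1 m2 ha hb hab

lemma face0_extreme_aux {A : Set E} (hA : Convex ℝ A) {p z x1 x2 : E} {a b : ℝ}
    (hz : z ∈ face0 A p) (h1 : x1 ∈ A) (h2 : x2 ∈ A)
    (ha : 0 < a) (hb : 0 < b) (hab : a + b = 1) (hcomb : a • x1 + b • x2 = z) :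
    x1 ∈ face0 A p := by
  obtain ⟨hzA, ε, hε, hq⟩ := hz
  have hb' : b = 1 - a := by linarith
  subst hb'
  set ε' : ℝ := a * ε / (1 + (1 - a) * ε) with hε'def
  have hden : (0:ℝ) < 1 + (1 - a) * ε := by nlinarith
  have hε' : 0 < ε' := by positivity
  refine ⟨h1, ε', hε', ?_⟩
  set β1 : ℝ := (1 + ε') / (1 + ε) with hβ1def
  set β2 : ℝ := ε' * (1 - a) / a with hβ2def
  have hβ1 : 0 < β1 := by positivity
  have hβ2 : 0 ≤ β2 := by
    apply div_nonneg _ ha.le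
    nlinarith
  have hβsum : β1 + β2 = 1 := by
    rw [hβ1def, hβ2def, hε'def]
    field_simp
    ring
  have hid : p + ε' • (p - x1) = β1 • (p + ε • (p - z)) + β2 • x2 := by
    rw [← hcomb]
    rw [hβ1def, hβ2def, hε'def]
    match_scalars <;> (field_simp; try ring)
  rw [hid]
  exact hA hq h2 hβ1.le hβ2 hβsum

lemma face0_isExtreme {A : Set E} (hA : Convex ℝ A) (p : E) :
    IsExtreme ℝ A (face0 A p) := by
  refine ⟨face0_subset A p, ?_⟩
  rintro x1 h1 x2 h2 z hz ⟨a, b, ha, hb, hab, hcomb⟩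
  exact face0_extreme_aux hA hz h1 h2 ha hb hab hcomb

lemma face0_subset_extreme {A F' : Set E} (hF : IsExtreme ℝ A F') {p : E} (hp : p ∈ F') :
    face0 A p ⊆ F' := by
  rintro z ⟨hzA, ε, hε, hq⟩
  have hseg : p ∈ openSegment ℝ z (p + ε • (p - z)) := by
    refine ⟨ε / (1 + ε), 1 / (1 + ε), by positivity, by positivity, ?_, ?_⟩
    · field_simp
      ring
    · match_scalars <;> (field_simp; try ring)
  exact hF.2 hzA hq hp hseg

lemma extreme_absorb {C F : Set E} (hCconv : Convex ℝ C) (hF : IsExtreme ℝ C F)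
    (s : Finset E) (μ : E → ℝ) (h0 : ∀ v ∈ s, 0 ≤ μ v) (h1 : ∑ v ∈ s, μ v = 1)
    (hs : ∀ v ∈ s, v ∈ C) (hz : (∑ v ∈ s, μ v • v) ∈ F)
    {v₀ : E} (hv₀ : v₀ ∈ s) (hμ₀ : 0 < μ v₀) : v₀ ∈ F := by
  classical
  rcases eq_or_lt_of_le (Finset.single_le_sum h0 hv₀ |>.trans h1.le) with h1' | h1'
  · -- μ v₀ = 1 : z = v₀
    have hrest : ∀ v ∈ s.erase v₀, μ v = 0 := by
      intro v hv
      have hsum : ∑ v ∈ s.erase v₀, μ v = 0 := by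
        have := Finset.add_sum_erase s μ hv₀
        rw [h1] at this
        linarith [this]
      have := Finset.sum_eq_zero_iff_of_nonneg
        (fun v hv => h0 v (Finset.mem_of_mem_erase hv)) |>.1 hsum
      exact this v hv
    have : (∑ v ∈ s, μ v • v) = v₀ := by
      rw [← Finset.add_sum_erase s (fun v => μ v • v) hv₀, h1', one_smul]
      rw [Finset.sum_eq_zero (fun v hv => by rw [hrest v hv, zero_smul]), add_zero]
    rwa [this] at hz
  · -- μ v₀ < 1
    set c : ℝ := 1 - μ v₀ with hc
    have hcpos : 0 < c := by linarith
    set z' : E := c⁻¹ • ∑ v ∈ s.erase v₀, μ v • v with hz'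
    have hz'C : z' ∈ C := by
      rw [hz', Finset.smul_sum]
      simp only [smul_smul]
      apply hCconv.sum_mem
      · intro v hv
        exact mul_nonneg (inv_nonneg.2 hcpos.le) (h0 v (Finset.mem_of_mem_erase hv))
      · rw [← Finset.mul_sum]
        have : ∑ v ∈ s.erase v₀, μ v = c := by
          have := Finset.add_sum_erase s μ hv₀
          rw [h1] at this; rw [hc]; linarith
        rw [this]
        exact inv_mul_cancel₀ hcpos.ne'
      · intro v hv; exact hs v (Finset.mem_of_mem_erase hv)
    have hseg : (∑ v ∈ s, μ v • v) ∈ openSegment ℝ v₀ z' := by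
      refine ⟨μ v₀, c, hμ₀, hcpos, by rw [hc]; ring, ?_⟩
      rw [hz', smul_inv_smul₀ hcpos.ne']
      exact (Finset.add_sum_erase s (fun v => μ v • v) hv₀)
    exact hF.2 (hs v₀ hv₀) hz'C hz hseg

lemma minFace_eq_face0 {C : Set E} (hCconv : Convex ℝ C) {y : E} (hy : y ∈ C) :
    minFace C y = face0 C y := by
  apply Set.Subset.antisymm
  · exact Set.sInter_subset_of_mem ⟨face0_isExtreme hCconv y, mem_face0_self hy⟩
  · intro z hz
    intro F' hF'
    exact face0_subset_extreme hF'.1 hF'.2 hz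

lemma setDist'_nonneg (A B : Set E) : 0 ≤ setDist' A B := by
  apply Real.sInf_nonneg
  rintro d ⟨a, _, b, _, rfl⟩
  exact norm_nonneg _

lemma innerFacial_nonneg (F C : Set E) : 0 ≤ innerFacial F C := by
  apply Real.sInf_nonneg
  rintro d ⟨G, _, _, _, rfl⟩
  exact setDist'_nonneg _ _

lemma stepDist_nonneg (C T : Set E) (y x : E) : 0 ≤ stepDist C T y x :=
  Real.sInf_nonneg (fun _ h => h.1)



lemma mem_convexHull_of_weights (t : Finset E) (μ : E → ℝ)
    (h0 : ∀ v ∈ t, 0 ≤ μ v) (h1 : ∑ v ∈ t, μ v = 1) :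
    (∑ v ∈ t, μ v • v) ∈ convexHull ℝ (t : Set E) := by
  have := Finset.centerMass_mem_convexHull t h0 (by rw [h1]; exact one_pos)
    (fun i hi => Finset.mem_coe.2 hi)
  rwa [Finset.centerMass_eq_of_sum_1 _ _ h1] at this

lemma filter_weight_sum (s : Finset E) (μ : E → ℝ) (h0 : ∀ v ∈ s, 0 ≤ μ v) :
    ∑ v ∈ s.filter (fun v => 0 < μ v), μ v = ∑ v ∈ s, μ v := by
  classical
  apply Finset.sum_filter_of_ne
  intro v hv hne
  exact lt_of_le_of_ne (h0 v hv) (Ne.symm hne)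

lemma filter_smul_sum (s : Finset E) (μ : E → ℝ) (h0 : ∀ v ∈ s, 0 ≤ μ v) :
    ∑ v ∈ s.filter (fun v => 0 < μ v), μ v • v = ∑ v ∈ s, μ v • v := by
  classical
  apply Finset.sum_filter_of_ne
  intro v hv hne
  rcases (h0 v hv).lt_or_eq with h | h
  · exact h
  · exact absurd (by rw [← h, zero_smul]) hne

lemma face0_eq_convexHull (V : Finset E) {C : Set E} (hC : C = convexHull ℝ (V : Set E))
    {y : E} (hy : y ∈ C) :
    face0 C y = convexHull ℝ ((V : Set E) ∩ face0 C y) := by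
  classical
  have hconv : Convex ℝ C := hC ▸ convex_convexHull ℝ _
  apply Set.Subset.antisymm
  · intro z hz
    have hzC : z ∈ C := hz.1
    rw [hC, Finset.convexHull_eq] at hzC
    obtain ⟨ν, hν0, hν1, hνz⟩ := hzC
    rw [Finset.centerMass_eq_of_sum_1 _ _ hν1] at hνz
    simp only [id] at hνz
    set T := V.filter (fun v => 0 < ν v) with hT
    have hsumw : ∑ v ∈ T, ν v = 1 := by rw [hT, filter_weight_sum V ν hν0, hν1]
    have hsum_eq : ∑ v ∈ T, ν v • v = z := by rw [hT, filter_smul_sum V ν hν0, hνz]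
    have hmem : z ∈ convexHull ℝ (T : Set E) := by
      rw [← hsum_eq]; exact mem_convexHull_of_weights T ν
        (fun v hv => hν0 v (Finset.mem_of_mem_filter v hv)) hsumw
    refine convexHull_mono ?_ hmem
    intro v hv
    have hvV : v ∈ V := Finset.mem_of_mem_filter v (Finset.mem_coe.1 hv)
    have hpos : 0 < ν v := (Finset.mem_filter.1 (Finset.mem_coe.1 hv)).2
    refine ⟨hvV, ?_⟩
    exact extreme_absorb hconv (face0_isExtreme hconv y) V ν hν0 hν1
      (fun v hvV => hC ▸ subset_convexHull ℝ _ hvV) (hνz ▸ hz) hvV hpos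
  · exact convexHull_min Set.inter_subset_right (face0_convex hconv hy)

set_option maxHeartbeats 2000000 in
lemma key_step {V : Finset E} {C : Set E} (hC : C = convexHull ℝ (V : Set E))
    (hCne : C.Nonempty) (hV : (V : Set E) = Set.extremePoints ℝ C)
    {x y : E} (hx : x ∈ C) (hy : y ∈ C) {S : Set E} (hS : S ∈ supports V x) :
    stepDist C (convexHull ℝ S) y x * innerFacial (minFace C y) C ≤ ‖y - x‖ := by
  classical
  obtain ⟨w, hw0, hw1, hwx, hSdef⟩ := hS
  have hconvC : Convex ℝ C := hC ▸ convex_convexHull ℝ _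
  have hVC : (V : Set E) ⊆ C := hC ▸ subset_convexHull ℝ _
  set S' : Finset E := V.filter (fun v => 0 < w v) with hS'
  have hSS' : S = ↑S' := by
    rw [hSdef, hS']; ext v; simp [Finset.mem_filter]
  have hS'sum1 : ∑ v ∈ S', w v = 1 := by
    rw [hS', filter_weight_sum V w (fun v _ => hw0 v), hw1]
  have hS'x : ∑ v ∈ S', w v • v = x := by
    rw [hS', filter_smul_sum V w (fun v _ => hw0 v), hwx]
  have hxS : x ∈ convexHull ℝ (S' : Set E) := by
    rw [← hS'x]
    exact mem_convexHull_of_weights S' w (fun v _ => hw0 v) hS'sum1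
  have hS'C : convexHull ℝ (S' : Set E) ⊆ C := by
    rw [hC]
    exact convexHull_mono
      (by intro v hv; exact Finset.mem_coe.2 (Finset.filter_subset _ _ (Finset.mem_coe.1 hv)))
  set δ := innerFacial (minFace C y) C with hδ
  have hδ0 : 0 ≤ δ := innerFacial_nonneg _ _
  have hΓbdd : BddBelow {γ : ℝ | 0 ≤ γ ∧ ∃ w ∈ C, ∃ u ∈ convexHull ℝ S, y - x = γ • (w - u)} :=
    ⟨0, fun γ hγ => hγ.1⟩
  by_cases hyx : y = x
  · obtain ⟨c, hc⟩ := hCne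
    have h0mem : (0:ℝ) ∈ {γ : ℝ | 0 ≤ γ ∧ ∃ w ∈ C, ∃ u ∈ convexHull ℝ S, y - x = γ • (w - u)} :=
      ⟨le_refl 0, c, hc, x, by rw [hSS']; exact hxS, by rw [hyx, sub_self, zero_smul]⟩
    have hle : stepDist C (convexHull ℝ S) y x ≤ 0 := csInf_le hΓbdd h0mem
    have hge : 0 ≤ stepDist C (convexHull ℝ S) y x := stepDist_nonneg _ _ _ _
    have hz : stepDist C (convexHull ℝ S) y x = 0 := le_antisymm hle hge
    rw [hz, zero_mul, hyx, sub_self, norm_zero]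
  -- main case
  set d := y - x with hd
  have hd0 : d ≠ 0 := sub_ne_zero.2 hyx
  have hdn : 0 < ‖d‖ := norm_pos_iff.2 hd0
  set F := face0 C y with hF
  have hminF : minFace C y = F := minFace_eq_face0 hconvC hy
  have hFconv : Convex ℝ F := face0_convex hconvC hy
  have hFC : F ⊆ C := face0_subset C y
  have hyF : y ∈ F := mem_face0_self hy
  have hFcomp : IsCompact F := by
    rw [hF, face0_eq_convexHull V hC hy]
    exact (V.finite_toSet.inter_of_left _).isCompact_convexHull ℝ
  have hcompS : IsCompact (convexHull ℝ (S' : Set E)) := S'.finite_toSet.isCompact_convexHull ℝ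
  obtain ⟨M, hM⟩ : ∃ M, ∀ z ∈ C, ‖z‖ ≤ M := by
    have : IsCompact C := hC ▸ V.finite_toSet.isCompact_convexHull ℝ
    exact isBounded_iff_forall_norm_le.1 this.isBounded
  set R := (M + M) / ‖d‖ with hR
  set K : Set (E × E × ℝ) := {q | q.1 ∈ F ∧ q.2.1 ∈ convexHull ℝ (S' : Set E) ∧
    q.1 - q.2.1 = q.2.2 • d ∧ 1 ≤ q.2.2} with hK
  have hKne : K.Nonempty := ⟨(y, x, 1), hyF, hxS, by rw [one_smul], le_refl 1⟩
  have hKsub : K ⊆ F ×ˢ (convexHull ℝ (S' : Set E) ×ˢ Set.Icc (1:ℝ) R) := by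
    rintro ⟨w', u', ρ⟩ ⟨h1, h2, h3, h4⟩
    refine ⟨h1, h2, h4, ?_⟩
    have hnorm : ρ * ‖d‖ = ‖w' - u'‖ := by
      rw [h3, norm_smul, Real.norm_of_nonneg (by linarith : (0:ℝ) ≤ ρ)]
    have hb : ‖w' - u'‖ ≤ M + M :=
      (norm_sub_le _ _).trans (add_le_add (hM _ (hFC h1)) (hM _ (hS'C h2)))
    rw [hR, le_div_iff₀ hdn]
    linarith [hnorm, hb]
  have hKclosed : IsClosed K := by
    have h1 : IsClosed {q : E × E × ℝ | q.1 ∈ F} := hFcomp.isClosed.preimage continuous_fst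
    have h2 : IsClosed {q : E × E × ℝ | q.2.1 ∈ convexHull ℝ (S' : Set E)} :=
      hcompS.isClosed.preimage (continuous_fst.comp continuous_snd)
    have h3 : IsClosed {q : E × E × ℝ | q.1 - q.2.1 = q.2.2 • d} :=
      isClosed_eq (continuous_fst.sub (continuous_fst.comp continuous_snd))
        ((continuous_snd.comp continuous_snd).smul continuous_const)
    have h4 : IsClosed {q : E × E × ℝ | 1 ≤ q.2.2} :=
      isClosed_le continuous_const (continuous_snd.comp continuous_snd)
    exact h1.inter (h2.inter (h3.inter h4))
  have hKcomp : IsCompact K :=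
    IsCompact.of_isClosed_subset (hFcomp.prod (hcompS.prod isCompact_Icc)) hKclosed hKsub
  obtain ⟨q, hqK, hqmax⟩ := hKcomp.exists_isMaxOn hKne
    ((continuous_snd.comp continuous_snd).continuousOn :
      ContinuousOn (fun q : E × E × ℝ => q.2.2) K)
  obtain ⟨hwF, huS, heq, hρ1⟩ := hqK
  set ws := q.1 with hws
  set us := q.2.1 with hus
  set ρs := q.2.2 with hρs
  have hρpos : (0:ℝ) < ρs := lt_of_lt_of_le one_pos hρ1
  set G := face0 F ws with hG
  have hwsG : ws ∈ G := mem_face0_self hwF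
  have husrep : us ∈ convexHull ℝ (S' : Set E) := huS
  rw [Finset.convexHull_eq] at husrep
  obtain ⟨μ, hμ0, hμ1, hμc⟩ := husrep
  rw [Finset.centerMass_eq_of_sum_1 _ _ hμ1] at hμc
  simp only [id] at hμc
  set T := S'.filter (fun v => 0 < μ v) with hT
  have hTsum1 : ∑ v ∈ T, μ v = 1 := by rw [hT, filter_weight_sum S' μ hμ0, hμ1]
  have hTsum : ∑ v ∈ T, μ v • v = us := by rw [hT, filter_smul_sum S' μ hμ0, hμc]
  have hTS' : T ⊆ S' := Finset.filter_subset _ _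
  have hTnotG : ∀ v₀ ∈ T, v₀ ∉ G := by
    intro v₀ hv₀T hv₀G
    obtain ⟨hv₀F, ε, hε, hwε⟩ := hv₀G
    have hα : 0 < μ v₀ := (Finset.mem_filter.1 hv₀T).2
    have hv₀S' : v₀ ∈ S' := hTS' hv₀T
    have hαle1 : μ v₀ ≤ 1 := by
      calc μ v₀ ≤ ∑ v ∈ S', μ v := Finset.single_le_sum hμ0 hv₀S'
        _ = 1 := hμ1
    set ε' := min ε (μ v₀) with hε'
    have hε'0 : 0 < ε' := lt_min hε hα
    have hε'ε : ε' ≤ ε := min_le_left _ _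
    have hε'α : ε' ≤ μ v₀ := min_le_right _ _
    set μ' := fun v => (1 + ε') * μ v - if v = v₀ then ε' else 0 with hμ'
    have hμ'0 : ∀ v ∈ S', 0 ≤ μ' v := by
      intro v hv
      by_cases h : v = v₀
      · subst h
        have heval : μ' v = (1 + ε') * μ v - ε' := by simp [hμ']
        rw [heval]
        nlinarith [mul_nonneg hε'0.le hα.le, hε'α]
      · simp only [hμ', if_neg h, sub_zero]
        have := hμ0 v hv; nlinarith
    have hμ'1 : ∑ v ∈ S', μ' v = 1 := by
      simp only [hμ']
      rw [Finset.sum_sub_distrib, ← Finset.mul_sum, hμ1,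
        Finset.sum_ite_eq' S' v₀ (fun _ => ε'), if_pos hv₀S']
      ring
    have hu'eq : ∑ v ∈ S', μ' v • v = (1 + ε') • us - ε' • v₀ := by
      simp only [hμ', sub_smul, ite_smul, zero_smul]
      rw [Finset.sum_sub_distrib, Finset.sum_ite_eq' S' v₀ (fun v => ε' • v), if_pos hv₀S']
      congr 1
      rw [← hμc, Finset.smul_sum]
      exact Finset.sum_congr rfl (fun v _ => by rw [mul_smul])
    have hu'mem : (1 + ε') • us - ε' • v₀ ∈ convexHull ℝ (S' : Set E) := by
      rw [← hu'eq]
      exact mem_convexHull_of_weights S' μ' hμ'0 hμ'1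
    have hw'mem : ws + ε' • (ws - v₀) ∈ F := by
      have hcomb : ws + ε' • (ws - v₀)
          = (1 - ε' / ε) • ws + (ε' / ε) • (ws + ε • (ws - v₀)) := by
        match_scalars <;> (field_simp; try ring)
      rw [hcomb]
      exact hFconv hwF hwε (sub_nonneg.2 ((div_le_one hε).2 hε'ε))
        (div_nonneg hε'0.le hε.le) (by ring)
    have hKmem : ((ws + ε' • (ws - v₀), ((1 + ε') • us - ε' • v₀, (1 + ε') * ρs)) :
        E × E × ℝ) ∈ K := by
      refine ⟨hw'mem, hu'mem, ?_, ?_⟩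
      · show ws + ε' • (ws - v₀) - ((1 + ε') • us - ε' • v₀) = ((1 + ε') * ρs) • d
        have hmod : ws + ε' • (ws - v₀) - ((1 + ε') • us - ε' • v₀)
            = (1 + ε') • (ws - us) := by module
        rw [hmod, heq, smul_smul]
      · show (1:ℝ) ≤ (1 + ε') * ρs
        nlinarith
    have hcontra := hqmax hKmem
    simp only [Set.mem_setOf_eq] at hcontra
    have hcon : (1 + ε') * ρs ≤ ρs := hcontra
    nlinarith
  have hTne : T.Nonempty := by
    by_contra h
    rw [Finset.not_nonempty_iff_eq_empty] at h
    rw [h, Finset.sum_empty] at hTsum1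
    exact one_ne_zero hTsum1.symm
  obtain ⟨v₀, hv₀⟩ := hTne
  have hGneC : G ≠ C := by
    intro h
    exact hTnotG v₀ hv₀ (h ▸ hVC (Finset.filter_subset _ _ (hTS' hv₀)))
  have hGextreme : IsExtreme ℝ F G := face0_isExtreme hFconv ws
  have husTG : us ∈ convexHull ℝ (Set.extremePoints ℝ C \ G) := by
    have h1 : us ∈ convexHull ℝ (T : Set E) := by
      rw [← hTsum]
      exact mem_convexHull_of_weights T μ (fun v hv => hμ0 v (hTS' hv)) hTsum1
    refine convexHull_mono ?_ h1
    intro v hv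
    have hvT := Finset.mem_coe.1 hv
    refine ⟨?_, hTnotG v hvT⟩
    rw [← hV]
    exact Finset.mem_coe.2 (Finset.filter_subset _ _ (hTS' hvT))
  have hsd : setDist' G (convexHull ℝ (Set.extremePoints ℝ C \ G)) ≤ ‖ws - us‖ :=
    csInf_le ⟨0, fun r ⟨a, _, b, _, hr⟩ => hr ▸ norm_nonneg _⟩
      ⟨ws, hwsG, us, husTG, rfl⟩
  have hδle : δ ≤ ‖ws - us‖ := by
    refine le_trans (csInf_le ⟨0, fun r ⟨G', _, _, _, hr⟩ => hr ▸ setDist'_nonneg _ _⟩ ?_) hsd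
    exact ⟨G, hminF ▸ hGextreme, ⟨ws, hwsG⟩, hGneC, rfl⟩
  have hnormeq : ‖ws - us‖ = ρs * ‖d‖ := by
    rw [heq, norm_smul, Real.norm_of_nonneg hρpos.le]
  have hstep : stepDist C (convexHull ℝ S) y x ≤ ρs⁻¹ := by
    apply csInf_le hΓbdd
    refine ⟨inv_nonneg.2 hρpos.le, ws, hFC hwF, us, ?_, ?_⟩
    · rw [hSS']; exact huS
    · rw [heq, smul_smul, inv_mul_cancel₀ hρpos.ne', one_smul]
  calc stepDist C (convexHull ℝ S) y x * δ ≤ ρs⁻¹ * δ :=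
        mul_le_mul_of_nonneg_right hstep hδ0
    _ ≤ ρs⁻¹ * (ρs * ‖d‖) :=
        mul_le_mul_of_nonneg_left (hδle.trans_eq hnormeq) (inv_nonneg.2 hρpos.le)
    _ = ‖d‖ := by field_simp

end helpers

/-- For all `x, y` in a polytope `C`: `‖y - x‖ ≥ v(y, x) · Φ(F(y), C)`. -/
theorem stmt12 {E : Type*} [NormedAddCommGroup E] [NormedSpace ℝ E]
    (V : Finset E) (C : Set E) (hC : C = convexHull ℝ (V : Set E)) (hCne : C.Nonempty)
    (hV : (V : Set E) = Set.extremePoints ℝ C) :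
    ∀ x ∈ C, ∀ y ∈ C,
      ‖y - x‖ ≥ vertexDist V C y x * innerFacial (minFace C y) C := by
  intro x hx y hy
  set δ := innerFacial (minFace C y) C with hδ
  have hδ0 : 0 ≤ δ := innerFacial_nonneg _ _
  have hkey : ∀ g ∈ {g : ℝ | ∃ S ∈ supports V x, g = stepDist C (convexHull ℝ S) y x},
      g * δ ≤ ‖y - x‖ := by
    rintro g ⟨S, hS, rfl⟩
    exact key_step hC hCne hV hx hy hS
  rcases hδ0.eq_or_lt with h0 | hpos
  · rw [ge_iff_le, vertexDist, ← h0, mul_zero]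
    exact norm_nonneg _
  · have hbound : ∀ g ∈ {g : ℝ | ∃ S ∈ supports V x, g = stepDist C (convexHull ℝ S) y x},
        g ≤ ‖y - x‖ / δ := by
      intro g hg
      rw [le_div_iff₀ hpos]
      exact hkey g hg
    have hsup : vertexDist V C y x ≤ ‖y - x‖ / δ :=
      Real.sSup_le hbound (div_nonneg (norm_nonneg _) hδ0)
    rw [ge_iff_le, ← le_div_iff₀ hpos]
    exact hsup
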